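/- Let (E,d) be a complete separable metric space and μ a Borel probability measure on E. Then μ satisfies T₁(C) for some constant C > 0 if and only if there exist ε > 0 and x₀ ∈ E such that ∫ exp(ε·d(x,x₀)²) dμ(x) < ∞. -/

import Mathlib

open MeasureTheory ENNReal
open scoped Classical

noncomputable section

/-- `π` is a coupling of the probability measures `μ` and `ν`:
its marginal distributions are `μ` and `ν`. -/
def IsCoupling {E : Type*} [MeasurableSpace E] (π : Measure (E × E)) (μ ν : Measure E) : Prop :=
  π.map Prod.fst = μ ∧ π.map Prod.snd = ν

/-- The `p`-th power of the `L^p` Wasserstein distance, `W_p^p(μ,ν)`, as the infimum of the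
transportation cost over all couplings. -/
def Wcost {E : Type*} [MetricSpace E] [MeasurableSpace E] (p : ℝ) (μ ν : Measure E) : ℝ≥0∞ :=
  ⨅ (π : Measure (E × E)) (_ : IsProbabilityMeasure π) (_ : IsCoupling π μ ν),
    ∫⁻ z, ENNReal.ofReal (dist z.1 z.2 ^ p) ∂π

/-- Relative entropy (Kullback-Leibler information) `H(ν,μ)`:
`∫ log (dν/dμ) dν` if `ν ≪ μ` (and the integral exists), `+∞` otherwise. -/
def relEnt {Ω : Type*} [MeasurableSpace Ω] (ν μ : Measure Ω) : ℝ≥0∞ :=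
  if ν ≪ μ ∧ Integrable (fun x => Real.log ((ν.rnDeriv μ) x).toReal) ν
  then ENNReal.ofReal (∫ x, Real.log ((ν.rnDeriv μ) x).toReal ∂ν)
  else ∞

/-- The transportation cost inequality `T_p(C)`: `W_p(μ,ν) ≤ √(2 C H(ν,μ))` for every
probability measure `ν`. -/
def TCI {E : Type*} [MetricSpace E] [MeasurableSpace E] (p : ℝ) (C : ℝ) (μ : Measure E) : Prop :=
  ∀ ν : Measure E, IsProbabilityMeasure ν →
    Wcost p μ ν ^ (1 / p) ≤ (ENNReal.ofReal (2 * C) * relEnt ν μ) ^ (1 / 2 : ℝ)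

/-- The measure `ν = h·μ`. -/
def densMeas {Ω : Type*} [MeasurableSpace Ω] (μ : Measure Ω) (h : Ω → ℝ) : Measure Ω :=
  μ.withDensity fun x => ENNReal.ofReal (h x)

/-- The truncated measure `ν_a = (1/ν(h ≤ a)) · h · 1_{h ≤ a} · μ` for `ν = h·μ`. -/
def truncMeas {Ω : Type*} [MeasurableSpace Ω] (μ : Measure Ω) (h : Ω → ℝ) (a : ℝ) : Measure Ω :=
  ((densMeas μ h) {x | h x ≤ a})⁻¹ • (densMeas μ h).restrict {x | h x ≤ a}

section Forward

variable {E : Type*} [MetricSpace E] [MeasurableSpace E] [BorelSpace E]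

/-- RHS of a `T₁` inequality as an `ofReal` of a square root. -/
lemma rhs_eq (C H : ℝ) (hC : 0 ≤ C) (hH : 0 ≤ H) :
    (ENNReal.ofReal (2 * C) * ENNReal.ofReal H) ^ (1 / 2 : ℝ)
      = ENNReal.ofReal (Real.sqrt (2 * C * H)) := by
  rw [← ENNReal.ofReal_mul (by linarith), ENNReal.ofReal_rpow_of_nonneg
    (by positivity) (by norm_num), Real.sqrt_eq_rpow]

/-- Tail estimate from the transportation inequality. -/
lemma tail_bound (μ : Measure E) [IsProbabilityMeasure μ] {C : ℝ} (hC : 0 < C)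
    (hT : TCI 1 C μ) (x₀ : E) {r₀ : ℝ} (hr₀ : 0 ≤ r₀)
    (hr : ENNReal.ofReal (1/2) ≤ μ {x | dist x x₀ ≤ r₀})
    {t : ℝ} (ht : r₀ < t) :
    μ {x | t < dist x x₀} ≤ ENNReal.ofReal (Real.exp (-(t - r₀)^2 / (8*C))) := by
  have hφ : Measurable fun x : E => dist x x₀ :=
    (continuous_id.dist continuous_const).measurable
  set B : Set E := {x | t < dist x x₀} with hBdef
  have hB : MeasurableSet B := measurableSet_lt measurable_const hφ
  set b : ℝ≥0∞ := μ B with hbdef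
  by_cases hb0 : b = 0
  · rw [hb0]; exact zero_le
  have hbt : b ≠ ⊤ := (measure_lt_top μ B).ne
  have hb1 : b ≤ 1 := prob_le_one
  -- the conditional measure on B
  set g : E → ℝ≥0∞ := B.indicator (fun _ => b⁻¹) with hgdef
  have hg : Measurable g := measurable_const.indicator hB
  set ν : Measure E := μ.withDensity g with hνdef
  have hν_univ : ν Set.univ = 1 := by
    rw [hνdef, withDensity_apply _ MeasurableSet.univ, Measure.restrict_univ,
      lintegral_indicator hB, setLIntegral_const]
    exact ENNReal.inv_mul_cancel hb0 hbt
  have hνprob : IsProbabilityMeasure ν := ⟨hν_univ⟩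
  have hac : ν ≪ μ := withDensity_absolutelyContinuous μ g
  have hrn : ν.rnDeriv μ =ᵐ[μ] g := Measure.rnDeriv_withDensity μ hg
  have hrnν : ν.rnDeriv μ =ᵐ[ν] g := hac.ae_le hrn
  have hBν : ∀ᵐ x ∂ν, x ∈ B := by
    have : ν Bᶜ = 0 := by
      rw [hνdef, withDensity_apply _ hB.compl]
      rw [setLIntegral_congr_fun hB.compl
        (fun x hx => Set.indicator_of_notMem hx _)]
      simp
    exact (ae_iff.2 this)
  set L : ℝ := -Real.log b.toReal with hLdef
  have hbpos : 0 < b.toReal := ENNReal.toReal_pos hb0 hbt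
  have hble : b.toReal ≤ 1 := by
    simpa using ENNReal.toReal_mono one_ne_top hb1
  have hL0 : 0 ≤ L := by
    have := Real.log_nonpos (le_of_lt hbpos) hble
    simpa [hLdef] using neg_nonneg.2 this
  have hlog : (fun x => Real.log ((ν.rnDeriv μ) x).toReal) =ᵐ[ν] fun _ => L := by
    filter_upwards [hrnν, hBν] with x hx hxB
    rw [hx, hgdef, Set.indicator_of_mem hxB, ENNReal.toReal_inv, Real.log_inv]
  have hInt : Integrable (fun x => Real.log ((ν.rnDeriv μ) x).toReal) ν :=
    (integrable_const L).congr hlog.symm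
  have hent : relEnt ν μ = ENNReal.ofReal L := by
    rw [relEnt, if_pos ⟨hac, hInt⟩, integral_congr_ae hlog]
    simp
  -- apply the transportation inequality
  have hTν := hT ν hνprob
  rw [hent] at hTν
  rw [show (1:ℝ)/1 = 1 by norm_num, ENNReal.rpow_one] at hTν
  rw [rhs_eq C L (le_of_lt hC) hL0] at hTν
  -- lower bound for the Wasserstein cost
  set A : Set E := {x | dist x x₀ ≤ r₀} with hAdef
  have hA : MeasurableSet A := measurableSet_le hφ measurable_const
  have hlow : ENNReal.ofReal (t - r₀) * μ A ≤ Wcost 1 μ ν := by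
    refine le_iInf fun π => le_iInf fun hπ => le_iInf fun hcoup => ?_
    have hπA : π (A ×ˢ Set.univ) = μ A := by
      rw [← hcoup.1, Measure.map_apply measurable_fst hA]
      congr 1
      ext z; simp
    have hπBc : π (Set.univ ×ˢ Bᶜ) = 0 := by
      rw [← le_zero_iff]
      have : π (Set.univ ×ˢ Bᶜ) = ν Bᶜ := by
        rw [← hcoup.2, Measure.map_apply measurable_snd hB.compl]
        congr 1
        ext z; simp
      rw [this]
      have : ν Bᶜ = 0 := by
        rw [← le_zero_iff]
        exact le_of_eq (ae_iff.1 hBν)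
      simp [this]
    have hsub : A ×ˢ Set.univ ⊆ (A ×ˢ B) ∪ (Set.univ ×ˢ Bᶜ) := by
      rintro ⟨x, y⟩ ⟨hx, -⟩
      by_cases hy : y ∈ B
      · exact Or.inl ⟨hx, hy⟩
      · exact Or.inr ⟨trivial, hy⟩
    have hπAB : μ A ≤ π (A ×ˢ B) := by
      calc μ A = π (A ×ˢ Set.univ) := hπA.symm
        _ ≤ π ((A ×ˢ B) ∪ (Set.univ ×ˢ Bᶜ)) := measure_mono hsub
        _ ≤ π (A ×ˢ B) + π (Set.univ ×ˢ Bᶜ) := measure_union_le _ _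
        _ = π (A ×ˢ B) := by rw [hπBc, add_zero]
    calc ENNReal.ofReal (t - r₀) * μ A
        ≤ ENNReal.ofReal (t - r₀) * π (A ×ˢ B) := by gcongr
      _ = ∫⁻ z, (A ×ˢ B).indicator (fun _ => ENNReal.ofReal (t - r₀)) z ∂π := by
          rw [lintegral_indicator (hA.prod hB), setLIntegral_const]
      _ ≤ ∫⁻ z, ENNReal.ofReal (dist z.1 z.2 ^ (1:ℝ)) ∂π := by
          refine lintegral_mono fun z => ?_
          by_cases hz : z ∈ A ×ˢ B
          · rw [Set.indicator_of_mem hz]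
            obtain ⟨hz1, hz2⟩ := hz
            have h1 : dist z.1 x₀ ≤ r₀ := hz1
            have h2 : t < dist z.2 x₀ := hz2
            have htri : dist z.2 x₀ ≤ dist z.1 z.2 + dist z.1 x₀ := by
              rw [dist_comm z.1 z.2]; exact dist_triangle _ _ _
            rw [Real.rpow_one]
            exact ENNReal.ofReal_le_ofReal (by linarith)
          · rw [Set.indicator_of_notMem hz]; exact zero_le
  -- combine
  have hcomb : ENNReal.ofReal ((t - r₀) * (1/2)) ≤ ENNReal.ofReal (Real.sqrt (2*C*L)) := by
    calc ENNReal.ofReal ((t - r₀) * (1/2))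
        = ENNReal.ofReal (t - r₀) * ENNReal.ofReal (1/2) :=
          ENNReal.ofReal_mul (by linarith)
      _ ≤ ENNReal.ofReal (t - r₀) * μ A := by gcongr
      _ ≤ Wcost 1 μ ν := hlow
      _ ≤ ENNReal.ofReal (Real.sqrt (2*C*L)) := hTν
  have hreal : (t - r₀) * (1/2) ≤ Real.sqrt (2*C*L) :=
    (ENNReal.ofReal_le_ofReal_iff (Real.sqrt_nonneg _)).1 hcomb
  have hsq : ((t - r₀) * (1/2))^2 ≤ 2*C*L := by
    have := (Real.le_sqrt (by linarith) (by positivity)).1 hreal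
    exact this
  have hLlb : (t - r₀)^2 / (8*C) ≤ L := by
    rw [div_le_iff₀ (by linarith)] at *
    nlinarith
  have hfin : b.toReal ≤ Real.exp (-(t - r₀)^2 / (8*C)) := by
    have hlogb : Real.log b.toReal ≤ -(t - r₀)^2 / (8*C) := by
      have : Real.log b.toReal = -L := by rw [hLdef]; ring
      rw [this, neg_div]
      linarith [hLlb]
    exact (Real.log_le_iff_le_exp hbpos).1 hlogb
  calc μ B = ENNReal.ofReal b.toReal := (ENNReal.ofReal_toReal hbt).symm
    _ ≤ ENNReal.ofReal (Real.exp (-(t - r₀)^2 / (8*C))) := ENNReal.ofReal_le_ofReal hfin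

end Forward

section Forward2
variable {E : Type*} [MetricSpace E] [MeasurableSpace E] [BorelSpace E]

lemma forward_dir (μ : Measure E) (hprob : IsProbabilityMeasure μ)
    {C : ℝ} (hC : 0 < C) (hT : TCI 1 C μ) :
    ∃ ε > (0 : ℝ), ∃ x₀ : E, Integrable (fun x => Real.exp (ε * dist x x₀ ^ 2)) μ := by
  have hne : Nonempty E := by
    by_contra h
    rw [not_nonempty_iff] at h
    have h1 : μ Set.univ = 1 := measure_univ
    rw [Set.univ_eq_empty_iff.2 h] at h1
    simp at h1
  obtain ⟨x₀⟩ := hne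
  have hφ : Measurable fun x : E => dist x x₀ :=
    (continuous_id.dist continuous_const).measurable
  -- find r₀ with μ(closed ball) ≥ 1/2
  obtain ⟨n₀, hn₀⟩ : ∃ n : ℕ, ENNReal.ofReal (1/2) ≤ μ {x | dist x x₀ ≤ (n : ℝ)} := by
    have hmono : Monotone fun n : ℕ => {x : E | dist x x₀ ≤ (n : ℝ)} := by
      intro i j hij x hx
      exact le_trans hx (Nat.cast_le.mpr hij : (i:ℝ) ≤ (j:ℝ))
    have hunion : ⋃ n : ℕ, {x : E | dist x x₀ ≤ (n : ℝ)} = Set.univ := by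
      ext x; simp only [Set.mem_iUnion, Set.mem_univ, iff_true]
      obtain ⟨n, hn⟩ := exists_nat_ge (dist x x₀)
      exact ⟨n, hn⟩
    have htend := tendsto_measure_iUnion_atTop (μ := μ) hmono
    rw [hunion] at htend
    have huniv : μ Set.univ = 1 := measure_univ
    rw [huniv] at htend
    have hhalf : ENNReal.ofReal (1/2) < 1 := by
      rw [← ENNReal.ofReal_one]
      exact ENNReal.ofReal_lt_ofReal_iff_of_nonneg (by norm_num) |>.2 (by norm_num)
    have := htend.eventually_const_le hhalf
    exact this.exists
  set r₀ : ℝ := (n₀ : ℝ) with hr₀def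
  have hr₀ : 0 ≤ r₀ := Nat.cast_nonneg _
  have htail : ∀ t : ℝ, r₀ < t →
      μ {x | t < dist x x₀} ≤ ENNReal.ofReal (Real.exp (-(t - r₀)^2 / (8*C))) :=
    fun t ht => tail_bound μ hC hT x₀ hr₀ hn₀ ht
  -- choose ε
  refine ⟨1/(32*C), by positivity, x₀, ?_⟩
  set ε : ℝ := 1/(32*C) with hεdef
  have hε : 0 < ε := by positivity
  constructor
  · exact ((Real.continuous_exp.comp ((continuous_const.mul
      (((continuous_id.dist continuous_const)).pow 2))))).aestronglyMeasurable
  rw [hasFiniteIntegral_iff_ofReal (Filter.Eventually.of_forall fun x => (Real.exp_pos _).le)]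
  -- shells
  set S : ℕ → Set E := fun n => {x | (n:ℝ) ≤ dist x x₀ ∧ dist x x₀ < (n:ℝ) + 1} with hSdef
  have hSmeas : ∀ n, MeasurableSet (S n) :=
    fun n => (measurableSet_le measurable_const hφ).inter (measurableSet_lt hφ measurable_const)
  have hSdisj : Pairwise (Function.onFun Disjoint S) := by
    intro i j hij
    rw [Function.onFun, Set.disjoint_left]
    rintro x ⟨hi1, hi2⟩ ⟨hj1, hj2⟩
    have h1 : (i:ℝ) < (j:ℝ) + 1 := lt_of_le_of_lt hi1 hj2
    have h2 : (j:ℝ) < (i:ℝ) + 1 := lt_of_le_of_lt hj1 hi2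
    have : i < j + 1 := by exact_mod_cast h1
    have : j < i + 1 := by exact_mod_cast h2
    omega
  have hSunion : ⋃ n, S n = Set.univ := by
    ext x
    simp only [Set.mem_iUnion, Set.mem_univ, iff_true]
    exact ⟨⌊dist x x₀⌋₊, Nat.floor_le dist_nonneg, Nat.lt_floor_add_one _⟩
  have hsplit : ∫⁻ x, ENNReal.ofReal (Real.exp (ε * dist x x₀ ^ 2)) ∂μ
      = ∑' n, ∫⁻ x in S n, ENNReal.ofReal (Real.exp (ε * dist x x₀ ^ 2)) ∂μ := by
    rw [← lintegral_iUnion hSmeas hSdisj, hSunion, Measure.restrict_univ]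
  rw [hsplit]
  -- per-shell bound
  set q : ℕ → ℝ := fun n => ε * ((n:ℝ)+1)^2 - (max 0 ((n:ℝ) - 1 - r₀))^2 / (8*C) with hqdef
  have hshell : ∀ n, ∫⁻ x in S n, ENNReal.ofReal (Real.exp (ε * dist x x₀ ^ 2)) ∂μ
      ≤ ENNReal.ofReal (Real.exp (q n)) := by
    intro n
    have h1 : ∫⁻ x in S n, ENNReal.ofReal (Real.exp (ε * dist x x₀ ^ 2)) ∂μ
        ≤ ENNReal.ofReal (Real.exp (ε * ((n:ℝ)+1)^2)) * μ (S n) := by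
      rw [← setLIntegral_const]
      refine setLIntegral_mono measurable_const fun x hx => ?_
      obtain ⟨hx1, hx2⟩ := hx
      refine ENNReal.ofReal_le_ofReal (Real.exp_le_exp.2 ?_)
      have : dist x x₀ ^ 2 ≤ ((n:ℝ)+1)^2 := by nlinarith [dist_nonneg (x := x) (y := x₀)]
      nlinarith
    have h2 : μ (S n) ≤ ENNReal.ofReal (Real.exp (-(max 0 ((n:ℝ) - 1 - r₀))^2 / (8*C))) := by
      by_cases hn : r₀ < (n:ℝ) - 1
      · have hmax : max 0 ((n:ℝ) - 1 - r₀) = (n:ℝ) - 1 - r₀ := max_eq_right (by linarith)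
        rw [hmax]
        have hsub : S n ⊆ {x | (n:ℝ) - 1 < dist x x₀} := by
          rintro x ⟨hx1, -⟩
          exact lt_of_lt_of_le (by linarith) hx1
        calc μ (S n) ≤ μ {x | (n:ℝ) - 1 < dist x x₀} := measure_mono hsub
          _ ≤ ENNReal.ofReal (Real.exp (-((n:ℝ) - 1 - r₀)^2 / (8*C))) := htail _ hn
      · have hmax : max 0 ((n:ℝ) - 1 - r₀) = 0 := max_eq_left (by linarith)
        rw [hmax]
        norm_num
        exact prob_le_one
    calc ∫⁻ x in S n, ENNReal.ofReal (Real.exp (ε * dist x x₀ ^ 2)) ∂μ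
        ≤ ENNReal.ofReal (Real.exp (ε * ((n:ℝ)+1)^2)) *
            ENNReal.ofReal (Real.exp (-(max 0 ((n:ℝ) - 1 - r₀))^2 / (8*C))) := by
          exact le_trans h1 (by gcongr)
      _ = ENNReal.ofReal (Real.exp (q n)) := by
          rw [← ENNReal.ofReal_mul (Real.exp_pos _).le, ← Real.exp_add]
          congr 1
          rw [hqdef]
          ring_nf
  -- summability
  have hsummable : Summable fun n => Real.exp (q n) := by
    set M : ℕ := ⌈8*r₀ + 32*C + 12⌉₊ with hMdef
    have hM : 8*r₀ + 32*C + 12 ≤ (M:ℝ) := Nat.le_ceil _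
    rw [← summable_nat_add_iff M]
    refine Summable.of_nonneg_of_le (fun n => (Real.exp_pos _).le) (fun n => ?_)
      (summable_geometric_of_lt_one (Real.exp_pos (-1)).le (Real.exp_lt_one_iff.2 (by norm_num)))
    have hqle : q (n + M) ≤ -((n:ℝ)) := by
      set m : ℝ := ((n + M : ℕ) : ℝ) with hmdef
      have hm1 : 8*r₀ + 32*C + 12 ≤ m := by
        rw [hmdef]; push_cast; linarith [Nat.cast_nonneg (α := ℝ) n]
      have hmn : (n:ℝ) ≤ m := by rw [hmdef]; push_cast; linarith [hM, hr₀, hC]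
      have hmax : max 0 (m - 1 - r₀) = m - 1 - r₀ := max_eq_right (by linarith)
      have : q (n + M) = ε * (m+1)^2 - (m - 1 - r₀)^2 / (8*C) := by
        rw [hqdef]; simp only [← hmdef, hmax]
      rw [this, hεdef]
      have hm0 : (0:ℝ) ≤ m := by rw [hmdef]; positivity
      have heq2 : 1/(32*C)*(m+1)^2 - (m-1-r₀)^2/(8*C)
          = ((m+1)^2 - 4*(m-1-r₀)^2)/(32*C) := by field_simp; ring
      rw [heq2, div_le_iff₀ (by positivity : (0:ℝ) < 32*C)]
      nlinarith [mul_le_mul_of_nonneg_right hm1 hm0,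
        mul_le_mul_of_nonneg_left hmn (by positivity : (0:ℝ) ≤ 32*C),
        mul_nonneg hr₀ hm0, hC.le, sq_nonneg r₀, mul_nonneg (mul_nonneg hC.le hr₀) hm0]
    calc Real.exp (q (n + M)) ≤ Real.exp (-((n:ℝ))) := Real.exp_le_exp.2 hqle
      _ = Real.exp (-1) ^ n := by rw [← Real.exp_nat_mul]; ring_nf
  -- conclude
  have : ∑' n, ENNReal.ofReal (Real.exp (q n)) ≠ ⊤ := by
    have heq : ∀ n, ENNReal.ofReal (Real.exp (q n))
        = ((Real.exp (q n)).toNNReal : ℝ≥0∞) := fun n => rfl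
    simp_rw [heq]
    rw [ENNReal.tsum_coe_ne_top_iff_summable]
    rw [← NNReal.summable_coe]
    refine hsummable.congr fun n => ?_
    rw [Real.coe_toNNReal _ (Real.exp_pos _).le]
  calc (∑' n, ∫⁻ x in S n, ENNReal.ofReal (Real.exp (ε * dist x x₀ ^ 2)) ∂μ)
      ≤ ∑' n, ENNReal.ofReal (Real.exp (q n)) := ENNReal.tsum_le_tsum hshell
    _ < ⊤ := this.lt_top

end Forward2

lemma rhs_eq' (C H : ℝ) (hC : 0 ≤ C) (hH : 0 ≤ H) :
    (ENNReal.ofReal (2 * C) * ENNReal.ofReal H) ^ (1 / 2 : ℝ)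
      = ENNReal.ofReal (Real.sqrt (2 * C * H)) := by
  rw [← ENNReal.ofReal_mul (by linarith), ENNReal.ofReal_rpow_of_nonneg
    (by positivity) (by norm_num), Real.sqrt_eq_rpow]

/-! ### Pointwise real inequalities -/

/-- `log t ≥ 1 - 1/t`, i.e. `t * log t ≥ t - 1`, for `t > 0`. -/
lemma mul_log_ge (t : ℝ) (ht : 0 < t) : t - 1 ≤ t * Real.log t := by
  have h := Real.log_le_sub_one_of_pos (show (0:ℝ) < t⁻¹ by positivity)
  rw [Real.log_inv] at h
  have := mul_le_mul_of_nonneg_left h ht.le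
  rw [mul_neg] at this
  have ht' : t * t⁻¹ = 1 := mul_inv_cancel₀ ht.ne'
  nlinarith

/-- nonnegativity of `u(t) = t log t - t + 1`. -/
lemma u_nonneg (t : ℝ) (ht : 0 ≤ t) : 0 ≤ t * Real.log t - t + 1 := by
  rcases eq_or_lt_of_le ht with h | h
  · simp [← h]
  · nlinarith [mul_log_ge t h]

/-- Fenchel/Young inequality pointwise: `a·b ≤ u(b) + (exp a - 1)`. -/
lemma young_pointwise (a b : ℝ) (hb : 0 ≤ b) :
    a * b ≤ (b * Real.log b - b + 1) + (Real.exp a - 1) := by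
  rcases eq_or_lt_of_le hb with h | h
  · rw [← h]; simp; positivity
  · have key : (a - Real.log b) + 1 ≤ Real.exp (a - Real.log b) := Real.add_one_le_exp _
    rw [Real.exp_sub, Real.exp_log h] at key
    have hb' : Real.exp a / b * b = Real.exp a := div_mul_cancel₀ _ h.ne'
    nlinarith [mul_le_mul_of_nonneg_right key h.le]

/-- `(√b - 1)² ≤ u(b)`. -/
lemma sqrt_sub_one_sq_le (b : ℝ) (hb : 0 ≤ b) :
    (Real.sqrt b - 1)^2 ≤ b * Real.log b - b + 1 := by
  rcases eq_or_lt_of_le hb with h | h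
  · rw [← h]; simp
  · set s := Real.sqrt b with hs
    have hspos : 0 < s := Real.sqrt_pos.2 h
    have hs2 : s^2 = b := Real.sq_sqrt hb
    have hlog : Real.log b = 2 * Real.log s := by
      rw [← hs2, Real.log_pow]; push_cast; ring
    have hkey : s - 1 ≤ s * Real.log s := mul_log_ge s hspos
    rw [hlog, ← hs2]
    nlinarith [mul_le_mul_of_nonneg_left hkey (le_of_lt hspos), hspos]

/-- `|b - 1| ≤ (√b + 1)·√(u b)`. -/
lemma abs_sub_one_le (b : ℝ) (hb : 0 ≤ b) :
    |b - 1| ≤ (Real.sqrt b + 1) * Real.sqrt (b * Real.log b - b + 1) := by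
  have h1 : |b - 1| = |Real.sqrt b - 1| * (Real.sqrt b + 1) := by
    rw [← abs_of_nonneg (show (0:ℝ) ≤ Real.sqrt b + 1 by positivity), ← abs_mul]
    congr 1
    have : Real.sqrt b * Real.sqrt b = b := Real.mul_self_sqrt hb
    ring_nf
    nlinarith [this]
  rw [h1, mul_comm (Real.sqrt b + 1)]
  refine mul_le_mul_of_nonneg_right ?_ (by positivity)
  rw [← Real.sqrt_sq_eq_abs]
  exact Real.sqrt_le_sqrt (sqrt_sub_one_sq_le b hb)

/-- `(√b + 1)² ≤ 2b + 2`. -/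
lemma sqrt_add_one_sq_le (b : ℝ) (hb : 0 ≤ b) :
    (Real.sqrt b + 1)^2 ≤ 2*b + 2 := by
  have h := Real.sq_sqrt hb
  nlinarith [sq_nonneg (Real.sqrt b - 1)]

/-- `2√ε·t ≤ exp(ε t²)` for `t ≥ 0`. -/
lemma lin_le_gauss (ε t : ℝ) (hε : 0 < ε) (ht : 0 ≤ t) :
    2 * Real.sqrt ε * t ≤ Real.exp (ε * t^2) := by
  have h1 : 2 * Real.sqrt ε * t ≤ 1 + ε * t^2 := by
    have h := Real.sq_sqrt hε.le
    nlinarith [sq_nonneg (Real.sqrt ε * t - 1)]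
  linarith [Real.add_one_le_exp (ε * t^2)]

lemma conj22 : Real.HolderConjugate 2 2 := by
  exact Real.HolderConjugate.two_two

section Backward
variable {E : Type*} [MetricSpace E] [MeasurableSpace E] [BorelSpace E]
  [TopologicalSpace.SeparableSpace E]

set_option maxHeartbeats 2000000 in
lemma backward_dir (μ : Measure E) (hprob : IsProbabilityMeasure μ)
    {ε : ℝ} (hε : 0 < ε) (x₀ : E)
    (hI : Integrable (fun x => Real.exp (ε * dist x x₀ ^ 2)) μ) :
    ∃ C > (0 : ℝ), TCI 1 C μ := by
  have hφ : Measurable fun x : E => dist x x₀ :=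
    (continuous_id.dist continuous_const).measurable
  set φ : E → ℝ := fun x => dist x x₀ with hφdef
  set Φ : E → ℝ≥0∞ := fun x => ENNReal.ofReal (φ x) with hΦdef
  have hΦm : Measurable Φ := ENNReal.measurable_ofReal.comp hφ
  set Aℓ : ℝ≥0∞ := ∫⁻ x, ENNReal.ofReal (Real.exp (ε * φ x ^ 2)) ∂μ with hAdef
  have hAlt : Aℓ < ⊤ := by
    rw [hAdef]
    exact (hasFiniteIntegral_iff_ofReal
      (Filter.Eventually.of_forall fun x => (Real.exp_pos _).le)).1 hI.2
  set a : ℝ := Aℓ.toReal with hadef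
  have hAa : Aℓ = ENNReal.ofReal a := (ENNReal.ofReal_toReal hAlt.ne).symm
  have ha1 : 1 ≤ a := by
    have h1 : (1 : ℝ≥0∞) ≤ Aℓ := by
      rw [hAdef]
      calc (1:ℝ≥0∞) = ∫⁻ _, 1 ∂μ := by simp
        _ ≤ _ := lintegral_mono fun x => by
            simp only [← ENNReal.ofReal_one]
            exact ENNReal.ofReal_le_ofReal (Real.one_le_exp (by positivity))
    calc (1:ℝ) = (1:ℝ≥0∞).toReal := by simp
      _ ≤ a := ENNReal.toReal_mono hAlt.ne h1
  have ha0 : 0 < a := lt_of_lt_of_le one_pos ha1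
  set K₁ : ℝ := a / (2 * Real.sqrt ε) with hK₁def
  have hK₁0 : 0 ≤ K₁ := by positivity
  set C₁ : ℝ := (1 + 2*a)/ε with hC₁def
  set C₂ : ℝ := (K₁ + Real.sqrt ((1+a)/ε))^2 / 2 with hC₂def
  set C : ℝ := max C₁ C₂ with hCdef
  have hC₁pos : 0 < C₁ := by rw [hC₁def]; positivity
  have hCpos : 0 < C := lt_of_lt_of_le hC₁pos (le_max_left _ _)
  refine ⟨C, hCpos, fun ν hν => ?_⟩
  rw [show (1:ℝ)/1 = 1 by norm_num, ENNReal.rpow_one]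
  by_cases hcond : ν ≪ μ ∧ Integrable (fun x => Real.log ((ν.rnDeriv μ) x).toReal) ν
  · obtain ⟨hac, hint⟩ := hcond
    rw [relEnt, if_pos ⟨hac, hint⟩]
    set h : E → ℝ≥0∞ := ν.rnDeriv μ with hhdef
    have hmeas : Measurable h := Measure.measurable_rnDeriv ν μ
    have hν_eq : μ.withDensity h = ν := Measure.withDensity_rnDeriv_eq ν μ hac
    have hfin : ∀ᵐ x ∂μ, h x < ⊤ := Measure.rnDeriv_lt_top ν μ
    set hr : E → ℝ := fun x => (h x).toReal with hrdef
    have hrm : Measurable hr := hmeas.ennreal_toReal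
    have hAE : h =ᵐ[μ] fun x => ENNReal.ofReal (hr x) := by
      filter_upwards [hfin] with x hx
      exact (ENNReal.ofReal_toReal hx.ne).symm
    set H : ℝ := ∫ x, Real.log (hr x) ∂ν with hHdef
    -- mass of h
    have hmass : ∫⁻ x, h x ∂μ = 1 := by
      have : (μ.withDensity h) Set.univ = 1 := by rw [hν_eq]; exact measure_univ
      rwa [withDensity_apply _ MeasurableSet.univ, Measure.restrict_univ] at this
    have hr_int : Integrable hr μ :=
      integrable_toReal_of_lintegral_ne_top hmeas.aemeasurable (by rw [hmass]; simp)
    have hr_mass : ∫ x, hr x ∂μ = 1 := by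
      rw [hrdef]
      rw [integral_toReal hmeas.aemeasurable hfin, hmass]
      simp
    -- transfer of integrability and integrals through withDensity
    have hν_eq' : μ.withDensity (fun x => ((h x).toNNReal : ℝ≥0∞)) = ν := by
      rw [withDensity_congr_ae (f := fun x => ((h x).toNNReal : ℝ≥0∞)) (g := h) ?_]
      · exact hν_eq
      · filter_upwards [hfin] with x hx
        exact ENNReal.coe_toNNReal hx.ne
    have htoNN : AEMeasurable (fun x => (h x).toNNReal) μ :=
      (hmeas.ennreal_toNNReal).aemeasurable
    have hrlog_int : Integrable (fun x => hr x * Real.log (hr x)) μ := by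
      have := (integrable_withDensity_iff_integrable_smul₀ htoNN
        (g := fun x => Real.log (hr x))).1 (by rw [hν_eq']; exact hint)
      refine this.congr (Filter.Eventually.of_forall fun x => ?_)
      simp [NNReal.smul_def, hrdef, ENNReal.toReal]
    have hrlog_eq : ∫ x, hr x * Real.log (hr x) ∂μ = H := by
      rw [hHdef, ← hν_eq', integral_withDensity_eq_integral_smul₀ htoNN]
      refine integral_congr_ae (Filter.Eventually.of_forall fun x => ?_)
      simp [NNReal.smul_def, hrdef, ENNReal.toReal]
    set u : E → ℝ := fun x => hr x * Real.log (hr x) - hr x + 1 with hudef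
    have hu_meas : Measurable u := by
      exact ((hrm.mul (hrm.log)).sub hrm).add measurable_const
    have hu_nonneg : ∀ x, 0 ≤ u x := fun x => u_nonneg _ ENNReal.toReal_nonneg
    have hu_int : Integrable u μ := by
      exact (hrlog_int.sub hr_int).add (integrable_const 1)
    have hsub_int : Integrable (fun x => hr x * Real.log (hr x) - hr x) μ :=
      hrlog_int.sub hr_int
    have hHu : ∫ x, u x ∂μ = H := by
      have h1 : ∫ x, (hr x * Real.log (hr x) - hr x) + 1 ∂μ
          = (∫ x, (hr x * Real.log (hr x) - hr x) ∂μ) + ∫ _, (1:ℝ) ∂μ :=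
        integral_add hsub_int (integrable_const 1)
      have h2 : ∫ x, (hr x * Real.log (hr x) - hr x) ∂μ
          = (∫ x, hr x * Real.log (hr x) ∂μ) - ∫ x, hr x ∂μ :=
        integral_sub hrlog_int hr_int
      calc ∫ x, u x ∂μ = ∫ x, (hr x * Real.log (hr x) - hr x) + 1 ∂μ := rfl
        _ = H := by rw [h1, h2, hrlog_eq, hr_mass, integral_const]; simp
    have hH0 : 0 ≤ H := by
      rw [← hHu]; exact integral_nonneg hu_nonneg
    have hUlint : ∫⁻ x, ENNReal.ofReal (u x) ∂μ = ENNReal.ofReal H := by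
      rw [← ofReal_integral_eq_lintegral_ofReal hu_int
        (Filter.Eventually.of_forall hu_nonneg), hHu]
    -- Donsker–Varadhan type bound
    have hDV : ∀ G : E → ℝ, Measurable G → (∀ x, 0 ≤ G x) →
        ∫⁻ x, ENNReal.ofReal (G x) ∂ν
          ≤ ENNReal.ofReal H + ∫⁻ x, ENNReal.ofReal (Real.exp (G x) - 1) ∂μ := by
      intro G hG hG0
      have hGm : Measurable fun x => ENNReal.ofReal (G x) :=
        ENNReal.measurable_ofReal.comp hG
      rw [← hν_eq, lintegral_withDensity_eq_lintegral_mul μ hmeas hGm]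
      have hbd : (fun x => (h * fun x => ENNReal.ofReal (G x)) x) ≤ᵐ[μ]
          fun x => ENNReal.ofReal (u x) + ENNReal.ofReal (Real.exp (G x) - 1) := by
        filter_upwards [hAE] with x hx
        simp only [Pi.mul_apply, hx]
        rw [← ENNReal.ofReal_mul (ENNReal.toReal_nonneg)]
        rw [← ENNReal.ofReal_add (hu_nonneg x) (by nlinarith [Real.one_le_exp (hG0 x)])]
        apply ENNReal.ofReal_le_ofReal
        have := young_pointwise (G x) (hr x) ENNReal.toReal_nonneg
        rw [hudef]
        dsimp only
        nlinarith [this]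
      calc ∫⁻ x, (h * fun x => ENNReal.ofReal (G x)) x ∂μ
          ≤ ∫⁻ x, (ENNReal.ofReal (u x) + ENNReal.ofReal (Real.exp (G x) - 1)) ∂μ :=
            lintegral_mono_ae hbd
        _ = ENNReal.ofReal H + ∫⁻ x, ENNReal.ofReal (Real.exp (G x) - 1) ∂μ := by
            rw [lintegral_add_left hu_meas.ennreal_ofReal, hUlint]
    -- second moment bounds
    have hG2m : Measurable fun x => ε * φ x ^ 2 :=
      (measurable_const.mul (hφ.pow_const 2))
    have hB1 : ∫⁻ x, ENNReal.ofReal (ε * φ x ^ 2) ∂ν ≤ ENNReal.ofReal H + Aℓ := by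
      refine le_trans (hDV _ hG2m fun x => by positivity) ?_
      gcongr
      rw [hAdef]
      exact lintegral_mono fun x => ENNReal.ofReal_le_ofReal (by nlinarith [Real.exp_pos (ε * φ x ^2)])
    have hB2 : ∫⁻ x, ENNReal.ofReal (ε * φ x ^ 2) ∂μ ≤ Aℓ := by
      rw [hAdef]
      exact lintegral_mono fun x => ENNReal.ofReal_le_ofReal
        (by linarith [Real.add_one_le_exp (ε * φ x ^ 2)])
    -- conversion between the two forms of the second moment
    have hconv : ∀ ρ : Measure E, ∫⁻ x, ENNReal.ofReal (ε * φ x ^ 2) ∂ρ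
        = ENNReal.ofReal ε * ∫⁻ x, Φ x ^ 2 ∂ρ := by
      intro ρ
      rw [← lintegral_const_mul _ (hΦm.pow_const 2)]
      congr 1
      funext x
      rw [ENNReal.ofReal_mul hε.le, hΦdef, ← ENNReal.ofReal_pow dist_nonneg]
    have hεne : ENNReal.ofReal ε ≠ 0 := (ENNReal.ofReal_pos.2 hε).ne'
    have hεnt : ENNReal.ofReal ε ≠ ⊤ := ENNReal.ofReal_ne_top
    have hΦ2ν : ∫⁻ x, Φ x ^ 2 ∂ν ≤ (ENNReal.ofReal H + ENNReal.ofReal a) / ENNReal.ofReal ε := by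
      rw [ENNReal.le_div_iff_mul_le (Or.inl hεne) (Or.inl hεnt), mul_comm, ← hconv ν]
      rw [← hAa]; exact hB1
    have hΦ2μ : ∫⁻ x, Φ x ^ 2 ∂μ ≤ ENNReal.ofReal a / ENNReal.ofReal ε := by
      rw [ENNReal.le_div_iff_mul_le (Or.inl hεne) (Or.inl hεnt), mul_comm, ← hconv μ]
      rw [← hAa]; exact hB2
    -- second countability for product measurability
    haveI : SecondCountableTopology E := UniformSpace.secondCountable_of_separable E
    have hcm : Measurable fun z : E × E => ENNReal.ofReal (dist z.1 z.2) :=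
      ENNReal.measurable_ofReal.comp continuous_dist.measurable
    -- generic coupling upper bound
    have key : ∀ π : Measure (E × E), IsProbabilityMeasure π → IsCoupling π μ ν →
        Wcost 1 μ ν ≤ ∫⁻ z, ENNReal.ofReal (dist z.1 z.2) ∂π := by
      intro π hp hc
      have h1 : Wcost 1 μ ν ≤ ∫⁻ z, ENNReal.ofReal (dist z.1 z.2 ^ (1:ℝ)) ∂π :=
        iInf_le_of_le π (iInf_le_of_le hp (iInf_le _ hc))
      simpa [Real.rpow_one] using h1
    -- Cauchy-Schwarz for lintegrals
    have lcs : ∀ (ρ : Measure E) (f g : E → ℝ≥0∞), Measurable f → Measurable g →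
        ∫⁻ x, f x * g x ∂ρ
          ≤ (∫⁻ x, f x ^ 2 ∂ρ) ^ (1/2:ℝ) * (∫⁻ x, g x ^ 2 ∂ρ) ^ (1/2:ℝ) := by
      intro ρ f g hf hg
      have h2 := ENNReal.lintegral_mul_le_Lp_mul_Lq ρ conj22 hf.aemeasurable hg.aemeasurable
      have hconv : ∀ y : ℝ≥0∞, y ^ (2:ℝ) = y ^ 2 := fun y => by
        rw [show (2:ℝ) = ((2:ℕ):ℝ) by norm_num, ENNReal.rpow_natCast]
      simp only [Pi.mul_apply, hconv] at h2
      exact h2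
    -- first moment bounds
    have hexpm : Measurable fun x => ENNReal.ofReal (Real.exp (ε * φ x ^ 2)) :=
      (Real.measurable_exp.comp hG2m).ennreal_ofReal
    have hs2 : (0:ℝ) < 2 * Real.sqrt ε := by positivity
    have hΦμ : ∫⁻ x, Φ x ∂μ ≤ ENNReal.ofReal K₁ := by
      calc ∫⁻ x, Φ x ∂μ
          ≤ ∫⁻ x, ENNReal.ofReal (Real.exp (ε * φ x ^ 2)) * ENNReal.ofReal (1/(2*Real.sqrt ε)) ∂μ := by
            refine lintegral_mono fun x => ?_
            rw [← ENNReal.ofReal_mul (Real.exp_pos _).le, hΦdef]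
            refine ENNReal.ofReal_le_ofReal ?_
            rw [mul_one_div, le_div_iff₀ hs2]
            have := lin_le_gauss ε (φ x) hε dist_nonneg
            linarith
        _ = Aℓ * ENNReal.ofReal (1/(2*Real.sqrt ε)) := by
            rw [lintegral_mul_const _ hexpm, hAdef]
        _ = ENNReal.ofReal K₁ := by
            rw [hAa, ← ENNReal.ofReal_mul (by positivity : (0:ℝ) ≤ a)]
            congr 1
            rw [hK₁def, mul_one_div]
    have hΦν : ∫⁻ x, Φ x ∂ν ≤ (∫⁻ x, Φ x ^ 2 ∂ν) ^ (1/2:ℝ) := by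
      have h3 := lcs ν Φ (fun _ => 1) hΦm measurable_const
      simpa using h3
    -- Wasserstein bound via the product coupling
    have marg : ∀ π : Measure (E × E), IsCoupling π μ ν →
        ∫⁻ z, (Φ z.1 + Φ z.2) ∂π = ∫⁻ x, Φ x ∂μ + ∫⁻ x, Φ x ∂ν := by
      intro π hc
      rw [lintegral_add_left (show Measurable fun z : E × E => Φ z.1 from hΦm.comp measurable_fst)]
      congr 1
      · rw [← hc.1, lintegral_map hΦm measurable_fst]
      · rw [← hc.2, lintegral_map hΦm measurable_snd]
    have hdist_le : ∀ z : E × E, ENNReal.ofReal (dist z.1 z.2) ≤ Φ z.1 + Φ z.2 := by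
      intro z
      rw [hΦdef]
      dsimp only
      rw [← ENNReal.ofReal_add dist_nonneg dist_nonneg]
      refine ENNReal.ofReal_le_ofReal ?_
      calc dist z.1 z.2 ≤ dist z.1 x₀ + dist x₀ z.2 := dist_triangle _ _ _
        _ = dist z.1 x₀ + dist z.2 x₀ := by rw [dist_comm x₀]
    have hWprod : Wcost 1 μ ν ≤ ∫⁻ x, Φ x ∂μ + ∫⁻ x, Φ x ∂ν := by
      have hcoup : IsCoupling (μ.prod ν) μ ν := by
        constructor
        · rw [Measure.map_fst_prod]; simp
        · rw [Measure.map_snd_prod]; simp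
      refine le_trans (key _ inferInstance hcoup) ?_
      refine le_trans (lintegral_mono hdist_le) ?_
      rw [marg _ hcoup]
    -- Wasserstein bound via the minimal coupling
    set g1 : E → ℝ≥0∞ := fun x => min (h x) 1 with hg1def
    have hg1m : Measurable g1 := hmeas.min measurable_const
    set pf : E → ℝ≥0∞ := fun x => 1 - g1 x with hpfdef
    set qf : E → ℝ≥0∞ := fun x => h x - g1 x with hqfdef
    have hpm : Measurable pf := measurable_const.sub hg1m
    have hqm : Measurable qf := hmeas.sub hg1m
    have hg1_le_one : ∀ x, g1 x ≤ 1 := fun x => min_le_right _ _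
    have hg1_le_h : ∀ x, g1 x ≤ h x := fun x => min_le_left _ _
    have hg1_int : ∫⁻ x, g1 x ∂μ ≤ 1 := by
      calc ∫⁻ x, g1 x ∂μ ≤ ∫⁻ _, 1 ∂μ := lintegral_mono hg1_le_one
        _ = 1 := by simp
    have hg1_ne_top : ∫⁻ x, g1 x ∂μ ≠ ⊤ := (lt_of_le_of_lt hg1_int one_lt_top).ne
    set m : ℝ≥0∞ := ∫⁻ x, pf x ∂μ with hmdef
    have hm_eq : m = 1 - ∫⁻ x, g1 x ∂μ := by
      rw [hmdef, hpfdef]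
      rw [lintegral_sub hg1m hg1_ne_top (Filter.Eventually.of_forall hg1_le_one)]
      simp
    have hq_mass : ∫⁻ x, qf x ∂μ = m := by
      rw [hqfdef]
      rw [lintegral_sub hg1m hg1_ne_top (Filter.Eventually.of_forall hg1_le_h), hmass, hm_eq]
    have hγ_mass : ∫⁻ x, g1 x ∂μ = 1 - m := by
      rw [hm_eq, ENNReal.sub_sub_cancel one_ne_top hg1_int]
    have hm_le : m ≤ 1 := by rw [hm_eq]; exact tsub_le_self
    have hm_top : m ≠ ⊤ := (lt_of_le_of_lt hm_le one_lt_top).ne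
    set γ : Measure E := μ.withDensity g1 with hγdef
    set μ₁ : Measure E := μ.withDensity pf with hμ₁def
    set ν₁ : Measure E := μ.withDensity qf with hν₁def
    have hμ₁_univ : μ₁ Set.univ = m := by
      rw [hμ₁def, withDensity_apply _ MeasurableSet.univ, Measure.restrict_univ]
    have hν₁_univ : ν₁ Set.univ = m := by
      rw [hν₁def, withDensity_apply _ MeasurableSet.univ, Measure.restrict_univ, hq_mass]
    have hγ_univ : γ Set.univ = 1 - m := by
      rw [hγdef, withDensity_apply _ MeasurableSet.univ, Measure.restrict_univ, hγ_mass]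
    have hsum_p : μ.withDensity (g1 + pf) = μ := by
      have h4 : g1 + pf = 1 := by
        funext x
        show g1 x + pf x = 1
        rw [hpfdef]
        exact add_tsub_cancel_of_le (hg1_le_one x)
      rw [h4, withDensity_one]
    have hsum_q : μ.withDensity (g1 + qf) = ν := by
      have h4 : g1 + qf = h := by
        funext x
        simp only [Pi.add_apply, hqfdef]
        exact add_tsub_cancel_of_le (hg1_le_h x)
      rw [h4, hν_eq]
    set Δ : E → E × E := fun x => (x, x) with hΔdef
    have hΔm : Measurable Δ := measurable_id.prodMk measurable_id
    have hfstΔ : Prod.fst ∘ Δ = id := rfl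
    have hsndΔ : Prod.snd ∘ Δ = id := rfl
    have hWmin : Wcost 1 μ ν ≤ ∫⁻ x, Φ x * ENNReal.ofReal |hr x - 1| ∂μ := by
      by_cases hm0 : m = 0
      · -- then ν = μ; use the diagonal coupling
        have hp0 : pf =ᵐ[μ] 0 := (lintegral_eq_zero_iff hpm).1 (by rw [← hmdef]; exact hm0)
        have hq0 : qf =ᵐ[μ] 0 := (lintegral_eq_zero_iff hqm).1 (by rw [hq_mass]; exact hm0)
        have hν_μ : ν = μ := by
          rw [← hν_eq]
          have h5 : h =ᵐ[μ] (1 : E → ℝ≥0∞) := by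
            filter_upwards [hp0, hq0] with x hpx hqx
            simp only [hpfdef, Pi.zero_apply] at hpx
            simp only [hqfdef, Pi.zero_apply] at hqx
            have h1' : (1:ℝ≥0∞) ≤ g1 x := tsub_eq_zero_iff_le.1 hpx
            have h2' : h x ≤ g1 x := tsub_eq_zero_iff_le.1 hqx
            have h3' : g1 x = 1 := le_antisymm (hg1_le_one x) h1'
            have h4' : h x = g1 x := le_antisymm h2' (hg1_le_h x)
            rw [h4', h3']
            rfl
          rw [withDensity_congr_ae h5, withDensity_one]
        have hdiag_prob : IsProbabilityMeasure (μ.map Δ) :=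
          Measure.isProbabilityMeasure_map hΔm.aemeasurable
        have hdiag_coup : IsCoupling (μ.map Δ) μ ν := by
          constructor
          · rw [Measure.map_map measurable_fst hΔm, hfstΔ, Measure.map_id]
          · rw [Measure.map_map measurable_snd hΔm, hsndΔ, Measure.map_id, hν_μ]
        refine le_trans (key _ hdiag_prob hdiag_coup) ?_
        rw [lintegral_map hcm hΔm]
        simp [hΔdef, dist_self]
      · -- minimal coupling
        haveI hfinμ₁ : IsFiniteMeasure μ₁ := by
          refine ⟨?_⟩; rw [hμ₁_univ]; exact hm_top.lt_top
        haveI hfinν₁ : IsFiniteMeasure ν₁ := by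
          refine ⟨?_⟩; rw [hν₁_univ]; exact hm_top.lt_top
        haveI hfinγ : IsFiniteMeasure γ := by
          refine ⟨?_⟩; rw [hγ_univ]; exact (lt_of_le_of_lt tsub_le_self one_lt_top)
        set π : Measure (E × E) := γ.map Δ + (m⁻¹ : ℝ≥0∞) • (μ₁.prod ν₁) with hπdef
        have hπ_univ : π Set.univ = 1 := by
          rw [hπdef, Measure.add_apply, Measure.smul_apply, smul_eq_mul,
            Measure.map_apply hΔm MeasurableSet.univ]
          have h6 : Δ ⁻¹' Set.univ = Set.univ := rfl
          rw [h6, hγ_univ, ← Set.univ_prod_univ, Measure.prod_prod, hμ₁_univ, hν₁_univ,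
            ← mul_assoc, ENNReal.inv_mul_cancel hm0 hm_top, one_mul]
          exact tsub_add_cancel_of_le hm_le
        have hπ_prob : IsProbabilityMeasure π := ⟨hπ_univ⟩
        have hπ_coup : IsCoupling π μ ν := by
          constructor
          · rw [hπdef, Measure.map_add _ _ measurable_fst, Measure.map_smul,
              Measure.map_map measurable_fst hΔm, hfstΔ, Measure.map_id,
              Measure.map_fst_prod, hν₁_univ, smul_smul,
              ENNReal.inv_mul_cancel hm0 hm_top, one_smul,
              hγdef, hμ₁def, ← withDensity_add_left hg1m]
            exact hsum_p
          · rw [hπdef, Measure.map_add _ _ measurable_snd, Measure.map_smul,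
              Measure.map_map measurable_snd hΔm, hsndΔ, Measure.map_id,
              Measure.map_snd_prod, hμ₁_univ, smul_smul,
              ENNReal.inv_mul_cancel hm0 hm_top, one_smul,
              hγdef, hν₁def, ← withDensity_add_left hg1m]
            exact hsum_q
        refine le_trans (key π hπ_prob hπ_coup) ?_
        rw [hπdef, lintegral_add_measure, lintegral_smul_measure, lintegral_map hcm hΔm]
        have hzero : ∫⁻ x, ENNReal.ofReal (dist (Δ x).1 (Δ x).2) ∂γ = 0 := by
          simp [hΔdef, dist_self]
        rw [hzero, zero_add]
        -- bound the product part
        have hprodbd : ∫⁻ z, ENNReal.ofReal (dist z.1 z.2) ∂(μ₁.prod ν₁)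
            ≤ m * (∫⁻ x, Φ x ∂μ₁) + m * (∫⁻ x, Φ x ∂ν₁) := by
          refine le_trans (lintegral_mono hdist_le) ?_
          rw [lintegral_add_left (show Measurable fun z : E × E => Φ z.1 from hΦm.comp measurable_fst)]
          have h7 : ∫⁻ z : E × E, Φ z.1 ∂(μ₁.prod ν₁) = m * ∫⁻ x, Φ x ∂μ₁ := by
            rw [← lintegral_map hΦm measurable_fst, Measure.map_fst_prod, hν₁_univ,
              lintegral_smul_measure, smul_eq_mul]
          have h8 : ∫⁻ z : E × E, Φ z.2 ∂(μ₁.prod ν₁) = m * ∫⁻ x, Φ x ∂ν₁ := by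
            rw [← lintegral_map hΦm measurable_snd, Measure.map_snd_prod, hμ₁_univ,
              lintegral_smul_measure, smul_eq_mul]
          rw [h7, h8]
        refine le_trans (mul_le_mul_right hprodbd m⁻¹) ?_
        rw [mul_add, ← mul_assoc, ← mul_assoc, ENNReal.inv_mul_cancel hm0 hm_top,
          one_mul, one_mul]
        have h9 : ∫⁻ x, Φ x ∂μ₁ = ∫⁻ x, pf x * Φ x ∂μ := by
          rw [hμ₁def, lintegral_withDensity_eq_lintegral_mul μ hpm hΦm]
          rfl
        have h10 : ∫⁻ x, Φ x ∂ν₁ = ∫⁻ x, qf x * Φ x ∂μ := by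
          rw [hν₁def, lintegral_withDensity_eq_lintegral_mul μ hqm hΦm]
          rfl
        rw [h9, h10, ← lintegral_add_left (show Measurable fun x => pf x * Φ x from hpm.mul hΦm)]
        refine le_of_eq (lintegral_congr_ae ?_)
        filter_upwards [hfin] with x hx
        rcases le_or_gt (h x) 1 with hle | hlt
        · have hg1x : g1 x = h x := min_eq_left hle
          have hpfx : pf x = 1 - h x := by rw [hpfdef]; simp only [hg1x]
          have hqfx : qf x = 0 := by rw [hqfdef]; simp only [hg1x, tsub_self]
          have hhr_le : hr x ≤ 1 := by
            calc hr x ≤ (1:ℝ≥0∞).toReal := ENNReal.toReal_mono one_ne_top hle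
              _ = 1 := by simp
          have habs : |hr x - 1| = 1 - hr x := by rw [abs_of_nonpos (by linarith)]; ring
          rw [hpfx, hqfx, habs, zero_mul, add_zero,
            ENNReal.ofReal_sub 1 ENNReal.toReal_nonneg, ENNReal.ofReal_one,
            ENNReal.ofReal_toReal hx.ne, mul_comm]
        · have hg1x : g1 x = 1 := min_eq_right hlt.le
          have hpfx : pf x = 0 := by rw [hpfdef]; simp only [hg1x, tsub_self]
          have hqfx : qf x = h x - 1 := by rw [hqfdef]; simp only [hg1x]
          have hhr_ge : 1 ≤ hr x := by
            calc (1:ℝ) = (1:ℝ≥0∞).toReal := by simp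
              _ ≤ hr x := ENNReal.toReal_mono hx.ne hlt.le
          have habs : |hr x - 1| = hr x - 1 := abs_of_nonneg (by linarith)
          rw [hpfx, hqfx, habs, zero_mul, zero_add,
            ENNReal.ofReal_sub _ (by norm_num : (0:ℝ) ≤ 1), ENNReal.ofReal_one,
            ENNReal.ofReal_toReal hx.ne, mul_comm]
    -- Cauchy-Schwarz estimate for the minimal coupling cost
    have hCS : ∫⁻ x, Φ x * ENNReal.ofReal |hr x - 1| ∂μ
        ≤ (2 * (∫⁻ x, Φ x ^ 2 ∂ν) + 2 * (∫⁻ x, Φ x ^ 2 ∂μ)) ^ (1/2:ℝ)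
          * (ENNReal.ofReal H) ^ (1/2:ℝ) := by
      set f : E → ℝ≥0∞ := fun x => Φ x * ENNReal.ofReal (Real.sqrt (hr x) + 1) with hfdef
      set g : E → ℝ≥0∞ := fun x => ENNReal.ofReal (Real.sqrt (u x)) with hgdef2
      have hfm : Measurable f := hΦm.mul ((hrm.sqrt.add measurable_const).ennreal_ofReal)
      have hgm : Measurable g := (hu_meas.sqrt).ennreal_ofReal
      have hptw : ∀ x, Φ x * ENNReal.ofReal |hr x - 1| ≤ f x * g x := by
        intro x
        have h1 := abs_sub_one_le (hr x) ENNReal.toReal_nonneg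
        calc Φ x * ENNReal.ofReal |hr x - 1|
            ≤ Φ x * ENNReal.ofReal ((Real.sqrt (hr x) + 1) * Real.sqrt (u x)) := by
              exact mul_le_mul_right (ENNReal.ofReal_le_ofReal h1) _
          _ = f x * g x := by
              rw [ENNReal.ofReal_mul (by positivity), hfdef, hgdef2]
              ring
      have hg2 : ∫⁻ x, g x ^ 2 ∂μ = ENNReal.ofReal H := by
        rw [← hUlint]
        refine lintegral_congr fun x => ?_
        rw [hgdef2, ← ENNReal.ofReal_pow (Real.sqrt_nonneg _), Real.sq_sqrt (hu_nonneg x)]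
      have hf2 : ∫⁻ x, f x ^ 2 ∂μ ≤ 2 * (∫⁻ x, Φ x ^ 2 ∂ν) + 2 * (∫⁻ x, Φ x ^ 2 ∂μ) := by
        have hb : ∀ᵐ x ∂μ, f x ^ 2 ≤ Φ x ^ 2 * (2 * h x + 2) := by
          filter_upwards [hAE] with x hx
          have hfx : f x ^ 2 = Φ x ^ 2 * ENNReal.ofReal ((Real.sqrt (hr x) + 1)^2) := by
            rw [ENNReal.ofReal_pow (by positivity), hfdef]
            dsimp only
            ring
          rw [hfx]
          gcongr
          calc ENNReal.ofReal ((Real.sqrt (hr x) + 1)^2)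
              ≤ ENNReal.ofReal (2 * hr x + 2) :=
                ENNReal.ofReal_le_ofReal (sqrt_add_one_sq_le _ ENNReal.toReal_nonneg)
            _ = 2 * h x + 2 := by
                rw [ENNReal.ofReal_add (by positivity) (by norm_num),
                  ENNReal.ofReal_mul (by norm_num), hx]
                norm_num
        calc ∫⁻ x, f x ^ 2 ∂μ ≤ ∫⁻ x, Φ x ^ 2 * (2 * h x + 2) ∂μ := lintegral_mono_ae hb
          _ = 2 * ∫⁻ x, h x * Φ x ^ 2 ∂μ + 2 * ∫⁻ x, Φ x ^ 2 ∂μ := by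
              have h5 : ∀ x, Φ x ^ 2 * (2 * h x + 2)
                  = 2 * (h x * Φ x ^ 2) + 2 * Φ x ^ 2 := fun x => by ring
              simp_rw [h5]
              rw [lintegral_add_left (show Measurable fun x => 2 * (h x * Φ x ^ 2) from
                measurable_const.mul (hmeas.mul (hΦm.pow_const 2))),
                lintegral_const_mul 2 (show Measurable fun x => h x * Φ x ^ 2 from hmeas.mul (hΦm.pow_const 2)),
                lintegral_const_mul 2 (hΦm.pow_const 2)]
          _ = 2 * (∫⁻ x, Φ x ^ 2 ∂ν) + 2 * (∫⁻ x, Φ x ^ 2 ∂μ) := by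
              congr 2
              rw [← hν_eq, lintegral_withDensity_eq_lintegral_mul μ hmeas (hΦm.pow_const 2)]
              rfl
      calc ∫⁻ x, Φ x * ENNReal.ofReal |hr x - 1| ∂μ
          ≤ ∫⁻ x, f x * g x ∂μ := lintegral_mono hptw
        _ ≤ (∫⁻ x, f x ^ 2 ∂μ) ^ (1/2:ℝ) * (∫⁻ x, g x ^ 2 ∂μ) ^ (1/2:ℝ) := lcs μ f g hfm hgm
        _ ≤ (2 * (∫⁻ x, Φ x ^ 2 ∂ν) + 2 * (∫⁻ x, Φ x ^ 2 ∂μ)) ^ (1/2:ℝ)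
              * (ENNReal.ofReal H) ^ (1/2:ℝ) := by
            rw [hg2]
            gcongr
    -- final combination
    rw [rhs_eq' C H hCpos.le hH0]
    by_cases hHle : H ≤ 1
    · -- small entropy: minimal coupling
      refine le_trans hWmin (le_trans hCS ?_)
      have hnum : 2 * (∫⁻ x, Φ x ^ 2 ∂ν) + 2 * (∫⁻ x, Φ x ^ 2 ∂μ)
          ≤ ENNReal.ofReal ((2 + 4*a)/ε) := by
        have hstep : 2 * (∫⁻ x, Φ x ^ 2 ∂ν) + 2 * (∫⁻ x, Φ x ^ 2 ∂μ)
            ≤ (2 * (ENNReal.ofReal H + ENNReal.ofReal a) + 2 * ENNReal.ofReal a)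
                * (ENNReal.ofReal ε)⁻¹ := by
          calc 2 * (∫⁻ x, Φ x ^ 2 ∂ν) + 2 * (∫⁻ x, Φ x ^ 2 ∂μ)
              ≤ 2 * ((ENNReal.ofReal H + ENNReal.ofReal a) / ENNReal.ofReal ε)
                + 2 * (ENNReal.ofReal a / ENNReal.ofReal ε) := by gcongr
            _ = (2 * (ENNReal.ofReal H + ENNReal.ofReal a) + 2 * ENNReal.ofReal a)
                * (ENNReal.ofReal ε)⁻¹ := by
                simp only [div_eq_mul_inv]; ring
        refine le_trans hstep ?_
        have hnum2 : 2 * (ENNReal.ofReal H + ENNReal.ofReal a) + 2 * ENNReal.ofReal a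
            ≤ ENNReal.ofReal (2 + 4*a) := by
          have h6 : ENNReal.ofReal (2 + 4*a)
              = 2 * (ENNReal.ofReal 1 + ENNReal.ofReal a) + 2 * ENNReal.ofReal a := by
            calc ENNReal.ofReal (2 + 4*a) = ENNReal.ofReal (2*(1+a) + 2*a) := by
                  congr 1; ring
              _ = ENNReal.ofReal (2*(1+a)) + ENNReal.ofReal (2*a) :=
                  ENNReal.ofReal_add (by positivity) (by positivity)
              _ = ENNReal.ofReal 2 * ENNReal.ofReal (1+a)
                  + ENNReal.ofReal 2 * ENNReal.ofReal a := by
                  rw [ENNReal.ofReal_mul (by norm_num), ENNReal.ofReal_mul (by norm_num)]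
              _ = 2 * (ENNReal.ofReal 1 + ENNReal.ofReal a) + 2 * ENNReal.ofReal a := by
                  rw [← ENNReal.ofReal_add (by norm_num) (by positivity)]
                  norm_num
          rw [h6]
          gcongr
        calc (2 * (ENNReal.ofReal H + ENNReal.ofReal a) + 2 * ENNReal.ofReal a)
              * (ENNReal.ofReal ε)⁻¹
            ≤ ENNReal.ofReal (2 + 4*a) * (ENNReal.ofReal ε)⁻¹ := by gcongr
          _ = ENNReal.ofReal ((2 + 4*a)/ε) := by
              rw [ENNReal.ofReal_div_of_pos hε, div_eq_mul_inv]
      calc (2 * (∫⁻ x, Φ x ^ 2 ∂ν) + 2 * (∫⁻ x, Φ x ^ 2 ∂μ)) ^ (1/2:ℝ)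
            * (ENNReal.ofReal H) ^ (1/2:ℝ)
          ≤ (ENNReal.ofReal ((2 + 4*a)/ε)) ^ (1/2:ℝ) * (ENNReal.ofReal H) ^ (1/2:ℝ) := by
            gcongr
        _ = ENNReal.ofReal (Real.sqrt ((2 + 4*a)/ε * H)) := by
            rw [ENNReal.ofReal_rpow_of_nonneg (by positivity) (by norm_num),
              ENNReal.ofReal_rpow_of_nonneg hH0 (by norm_num),
              ← ENNReal.ofReal_mul (by positivity),
              ← Real.sqrt_eq_rpow, ← Real.sqrt_eq_rpow,
              ← Real.sqrt_mul (by positivity)]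
        _ ≤ ENNReal.ofReal (Real.sqrt (2 * C * H)) := by
            refine ENNReal.ofReal_le_ofReal (Real.sqrt_le_sqrt ?_)
            have hC₁C : C₁ ≤ C := le_max_left _ _
            have h7 : (2 + 4*a)/ε = 2 * C₁ := by rw [hC₁def]; field_simp; ring
            rw [h7]
            nlinarith [hH0, hC₁pos]
    · -- large entropy: product coupling
      push_neg at hHle
      refine le_trans hWprod ?_
      have hν_bd : ∫⁻ x, Φ x ∂ν ≤ ENNReal.ofReal (Real.sqrt ((1+a)/ε * H)) := by
        refine le_trans hΦν ?_
        have h8 : ∫⁻ x, Φ x ^ 2 ∂ν ≤ ENNReal.ofReal ((1+a)/ε * H) := by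
          refine le_trans hΦ2ν ?_
          have h9 : ENNReal.ofReal H + ENNReal.ofReal a ≤ ENNReal.ofReal ((1+a) * H) := by
            rw [← ENNReal.ofReal_add hH0 (by positivity)]
            refine ENNReal.ofReal_le_ofReal ?_
            nlinarith
          calc (ENNReal.ofReal H + ENNReal.ofReal a) / ENNReal.ofReal ε
              ≤ ENNReal.ofReal ((1+a) * H) / ENNReal.ofReal ε := by gcongr
            _ = ENNReal.ofReal ((1+a) * H / ε) := by rw [ENNReal.ofReal_div_of_pos hε]
            _ = ENNReal.ofReal ((1+a)/ε * H) := by congr 1; ring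
        calc (∫⁻ x, Φ x ^ 2 ∂ν) ^ (1/2:ℝ)
            ≤ (ENNReal.ofReal ((1+a)/ε * H)) ^ (1/2:ℝ) := by gcongr
          _ = ENNReal.ofReal (Real.sqrt ((1+a)/ε * H)) := by
              rw [ENNReal.ofReal_rpow_of_nonneg (by positivity) (by norm_num),
                ← Real.sqrt_eq_rpow]
      calc ∫⁻ x, Φ x ∂μ + ∫⁻ x, Φ x ∂ν
          ≤ ENNReal.ofReal K₁ + ENNReal.ofReal (Real.sqrt ((1+a)/ε * H)) :=
            add_le_add hΦμ hν_bd
        _ = ENNReal.ofReal (K₁ + Real.sqrt ((1+a)/ε * H)) :=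
            (ENNReal.ofReal_add hK₁0 (Real.sqrt_nonneg _)).symm
        _ ≤ ENNReal.ofReal (Real.sqrt (2 * C * H)) := by
            refine ENNReal.ofReal_le_ofReal ?_
            set s : ℝ := Real.sqrt ((1+a)/ε) with hsdef
            have hs0 : 0 ≤ s := Real.sqrt_nonneg _
            have hsqH : 1 ≤ Real.sqrt H := Real.one_le_sqrt.2 hHle.le
            have hsplit2 : Real.sqrt ((1+a)/ε * H) = s * Real.sqrt H := by
              rw [hsdef, ← Real.sqrt_mul (by positivity)]
            have hC₂C : C₂ ≤ C := le_max_right _ _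
            have hBsq : Real.sqrt (2 * C₂ * H) = (K₁ + s) * Real.sqrt H := by
              rw [show 2 * C₂ * H = (K₁ + s)^2 * H by rw [hC₂def]; ring,
                Real.sqrt_mul (by positivity), Real.sqrt_sq (by positivity)]
            have hle2 : K₁ + Real.sqrt ((1+a)/ε * H) ≤ Real.sqrt (2 * C₂ * H) := by
              rw [hsplit2, hBsq]
              nlinarith
            refine le_trans hle2 (Real.sqrt_le_sqrt ?_)
            nlinarith [hH0, hC₂C, hCpos]

  · rw [relEnt, if_neg hcond]
    rw [ENNReal.mul_top ((ENNReal.ofReal_pos.2 (by linarith : (0:ℝ) < 2*C)).ne')]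
    rw [ENNReal.top_rpow_of_pos (by norm_num)]
    exact le_top

end Backward

/-- **Theorem 1.4 (Djellout–Guillin–Wu).** `μ` satisfies `T₁(C)` for some `C > 0` if and only if
`∫ exp(ε d(x,x₀)²) dμ < ∞` for some `ε > 0` and some `x₀`. -/
theorem t1_iff_gauss_integrable
    {E : Type*} [MetricSpace E] [CompleteSpace E] [TopologicalSpace.SeparableSpace E]
    [MeasurableSpace E] [BorelSpace E]
    (μ : Measure E) (hprob : IsProbabilityMeasure μ) :
    (∃ C > (0 : ℝ), TCI 1 C μ) ↔
      (∃ ε > (0 : ℝ), ∃ x₀ : E, Integrable (fun x => Real.exp (ε * dist x x₀ ^ 2)) μ) := by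
  constructor
  · rintro ⟨C, hC, hT⟩
    exact forward_dir μ hprob hC hT
  · rintro ⟨ε, hε, x₀, hI⟩
    exact backward_dir μ hprob hε x₀ hI

end
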